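/- Let p > 1 with conjugate exponent q, and let (f_α)_{α∈Ω} together with (τ_α) and (g_β)_{β∈Δ} together with (ω_β) be continuous p-Schauder frames for a Banach space X over finite or σ-finite measure spaces (Ω,μ), (Δ,ν): ‖x‖^p = ∫_Ω |f_α(x)|^p dμ, x = ∫_Δ g_β(x) ω_β dν weakly, etc. Assume C := sup_{α,β} |f_α(ω_β)| < ∞. Then for every nonzero x ∈ X, μ(supp(θ_f x))^{1/p} · ν(supp(θ_g x))^{1/q} ≥ 1/C, where supp(θ_f x) = {α : f_α(x) ≠ 0}. -/

import Mathlib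

open scoped ENNReal


open MeasureTheory

/-- Functional continuous Donoho–Stark–Elad–Bruckstein–Ricaud–Torrésani uncertainty
principle, case `p > 1` with conjugate exponent `q`: for continuous p-Schauder frames
`(f, τ)` over `(Ω, μ)` and `(g, ω)` over `(Δ, ν)` of a Banach space `X`, with
`C = sup |f α (ω β)| < ∞`, every nonzero `x` satisfies
`μ(supp θ_f x)^{1/p} ν(supp θ_g x)^{1/q} ≥ 1/C`. -/
theorem continuous_uncertainty_principle_p_gt_one
    {Ω Δ : Type*} [MeasurableSpace Ω] [MeasurableSpace Δ]
    (μ : Measure Ω) (ν : Measure Δ) [SigmaFinite μ] [SigmaFinite ν]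
    {X : Type*} [NormedAddCommGroup X] [NormedSpace ℂ X] [CompleteSpace X]
    (p q : ℝ) (hpq : p.HolderConjugate q)
    (f : Ω → X →L[ℂ] ℂ) (τ : Ω → X) (g : Δ → X →L[ℂ] ℂ) (ω : Δ → X)
    (hf : ∀ x : X, ‖x‖ ^ p = ∫ α, ‖f α x‖ ^ p ∂μ)
    (hg : ∀ x : X, ‖x‖ ^ p = ∫ β, ‖g β x‖ ^ p ∂ν)
    (hgint : ∀ x : X, Integrable (fun β => ‖g β x‖) ν)
    (hexp : ∀ (x : X) (α : Ω), f α x = ∫ β, g β x * f α (ω β) ∂ν)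
    (C : ℝ) (hC : ∀ α β, ‖f α (ω β)‖ ≤ C)
    (x : X) (hx : x ≠ 0) :
    (μ {α | f α x ≠ 0}) ^ (1 / p) * (ν {β | g β x ≠ 0}) ^ (1 / q) ≥
      ENNReal.ofReal (1 / C) := by
  rcases le_or_gt C 0 with hC0 | hC0
  · have : ENNReal.ofReal (1 / C) = 0 := by
      rw [ENNReal.ofReal_eq_zero]
      exact one_div_nonpos.mpr hC0
    rw [this]
    exact zero_le
  have hp0 : (0:ℝ) < p := hpq.pos
  have hq0 : (0:ℝ) < q := hpq.symm.pos
  have hxn : (0:ℝ) < ‖x‖ := norm_pos_iff.2 hx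
  have hxp : (0:ℝ) < ‖x‖ ^ p := Real.rpow_pos_of_pos hxn p
  set A := {α | f α x ≠ 0} with hA
  set B := {β | g β x ≠ 0} with hB
  -- integrability of the p-th powers
  have hfint : Integrable (fun α => ‖f α x‖ ^ p) μ := by
    by_contra h
    have := hf x
    rw [integral_undef h] at this
    exact hxp.ne' this
  have hgp : Integrable (fun β => ‖g β x‖ ^ p) ν := by
    by_contra h
    have := hg x
    rw [integral_undef h] at this
    exact hxp.ne' this
  -- measurable version of the support of θ_g x
  have hsm := (hgint x).aestronglyMeasurable
  set h : Δ → ℝ := hsm.mk _ with hhdef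
  have hmeas : StronglyMeasurable h := hsm.stronglyMeasurable_mk
  have hae : (fun β => ‖g β x‖) =ᵐ[ν] h := hsm.ae_eq_mk
  set B' := {β | h β ≠ 0} with hB'def
  have hB'm : MeasurableSet B' := (hmeas.measurable (measurableSet_singleton (0:ℝ))).compl
  have hBB' : ν B = ν B' := by
    refine measure_congr ?_
    filter_upwards [hae] with β hβ
    have : (β ∈ B) ↔ (β ∈ B') := by
      simp only [hB, hB'def, Set.mem_setOf_eq, ← hβ, norm_ne_zero_iff]
    exact propext this
  -- supports have positive measure
  have hBne : ν B' ≠ 0 := by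
    intro h0
    have hz : ∀ᵐ β ∂ν, h β = 0 := by
      rw [ae_iff]; exact h0
    have hz2 : (fun β => ‖g β x‖ ^ p) =ᵐ[ν] 0 := by
      filter_upwards [hae, hz] with β h1 h2
      simp [h1, h2, Real.zero_rpow hp0.ne']
    have := hg x
    rw [integral_eq_zero_of_ae hz2] at this
    exact hxp.ne' this
  have hAne : μ A ≠ 0 := by
    intro h0
    have hz : ∀ᵐ α ∂μ, f α x = 0 := by
      rw [ae_iff]; exact h0
    have hz2 : (fun α => ‖f α x‖ ^ p) =ᵐ[μ] 0 := by
      filter_upwards [hz] with α h1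
      simp [h1, Real.zero_rpow hp0.ne']
    have := hf x
    rw [integral_eq_zero_of_ae hz2] at this
    exact hxp.ne' this
  have hBne0 : ν B ≠ 0 := by rw [hBB']; exact hBne
  -- infinite measure cases
  by_cases hAtop : μ A = ⊤
  · rw [hAtop, ENNReal.top_rpow_of_pos (by positivity), ENNReal.top_mul]
    · exact le_top
    · simp [ENNReal.rpow_eq_zero_iff, hBne0, (one_div_pos.mpr hq0), hq0.le, not_lt.2]
  by_cases hBtop : ν B = ⊤
  · rw [hBtop, ENNReal.top_rpow_of_pos (by positivity), ENNReal.mul_top]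
    · exact le_top
    · simp [ENNReal.rpow_eq_zero_iff, hAne, (one_div_pos.mpr hp0), hp0.le, not_lt.2]
  have hBtop' : ν B' ≠ ⊤ := by rw [← hBB']; exact hBtop
  -- Hölder's inequality at the lintegral level
  set F : Δ → ℝ≥0∞ := fun β => ENNReal.ofReal ‖g β x‖ with hFdef
  set G : Δ → ℝ≥0∞ := B'.indicator (fun _ => 1) with hGdef
  have hFa : AEMeasurable F ν :=
    ENNReal.measurable_ofReal.comp_aemeasurable (hgint x).aemeasurable
  have hGa : AEMeasurable G ν := (measurable_const.indicator hB'm).aemeasurable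
  have holder := ENNReal.lintegral_mul_le_Lp_mul_Lq ν hpq hFa hGa
  have hFp : ∫⁻ β, F β ^ p ∂ν = ENNReal.ofReal (‖x‖ ^ p) := by
    have h1 : ∀ β, F β ^ p = ENNReal.ofReal (‖g β x‖ ^ p) := fun β =>
      ENNReal.ofReal_rpow_of_nonneg (norm_nonneg _) hp0.le
    simp_rw [h1]
    rw [← ofReal_integral_eq_lintegral_ofReal hgp
      (Filter.Eventually.of_forall fun β => Real.rpow_nonneg (norm_nonneg _) p), ← hg x]
  have hGq : ∫⁻ β, G β ^ q ∂ν = ν B' := by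
    have h1 : ∀ β, G β ^ q = G β := by
      intro β
      by_cases hβ : β ∈ B'
      · simp [hGdef, Set.indicator_of_mem hβ]
      · simp [hGdef, Set.indicator_of_notMem hβ, ENNReal.zero_rpow_of_pos hq0]
    simp_rw [h1]
    rw [hGdef, lintegral_indicator_const hB'm, one_mul]
  have holder2 : ∫⁻ β, F β * G β ∂ν ≤ ENNReal.ofReal ‖x‖ * (ν B') ^ (1/q) := by
    refine le_trans (le_of_eq ?_) (holder.trans (le_of_eq ?_))
    · rfl
    · rw [hFp, hGq, ENNReal.ofReal_rpow_of_nonneg hxp.le (by positivity),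
        ← Real.rpow_mul hxn.le, mul_one_div_cancel hp0.ne', Real.rpow_one]
  -- pointwise bound on f α x
  have key : ∀ α : Ω, ENNReal.ofReal ‖f α x‖ ≤
      ENNReal.ofReal C * (ENNReal.ofReal ‖x‖ * (ν B') ^ (1/q)) := by
    intro α
    set φ : Δ → ℝ := B'.indicator (fun β => ‖g β x‖) with hφdef
    have hφint : Integrable φ ν := (hgint x).indicator hB'm
    have hreal : ‖f α x‖ ≤ C * ∫ β, φ β ∂ν := by
      have h1 : ‖f α x‖ ≤ ∫ β, ‖g β x‖ * ‖f α (ω β)‖ ∂ν := by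
        rw [hexp x α]
        refine (norm_integral_le_integral_norm _).trans (le_of_eq ?_)
        simp [norm_mul]
      have h2 : ∫ β, ‖g β x‖ * ‖f α (ω β)‖ ∂ν ≤ ∫ β, C * φ β ∂ν := by
        refine integral_mono_of_nonneg
          (Filter.Eventually.of_forall fun β => by positivity) (hφint.const_mul C) ?_
        filter_upwards [hae] with β hβ
        by_cases hm : β ∈ B'
        · rw [hφdef]
          simp only [Set.indicator_of_mem hm]
          rw [mul_comm C _]
          exact mul_le_mul_of_nonneg_left (hC α β) (norm_nonneg _)
        · have hh0 : h β = 0 := not_not.1 hm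
          have hg0 : ‖g β x‖ = 0 := by rw [hβ, hh0]
          rw [hφdef]
          simp [Set.indicator_of_notMem hm, hg0]
      calc ‖f α x‖ ≤ ∫ β, C * φ β ∂ν := h1.trans h2
        _ = C * ∫ β, φ β ∂ν := integral_const_mul C φ
    have hφnn : 0 ≤ᵐ[ν] φ := Filter.Eventually.of_forall fun β =>
      Set.indicator_nonneg (fun _ _ => norm_nonneg _) β
    have hlin : ENNReal.ofReal (∫ β, φ β ∂ν) = ∫⁻ β, F β * G β ∂ν := by
      rw [ofReal_integral_eq_lintegral_ofReal hφint hφnn]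
      refine lintegral_congr fun β => ?_
      by_cases hm : β ∈ B'
      · simp [hφdef, hFdef, hGdef, Set.indicator_of_mem hm]
      · simp [hφdef, hFdef, hGdef, Set.indicator_of_notMem hm]
    calc ENNReal.ofReal ‖f α x‖
        ≤ ENNReal.ofReal (C * ∫ β, φ β ∂ν) := ENNReal.ofReal_le_ofReal hreal
      _ = ENNReal.ofReal C * ENNReal.ofReal (∫ β, φ β ∂ν) := ENNReal.ofReal_mul hC0.le
      _ = ENNReal.ofReal C * ∫⁻ β, F β * G β ∂ν := by rw [hlin]
      _ ≤ _ := mul_le_mul_right holder2 _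
  -- integrate the p-th power over A
  set M : ℝ≥0∞ := ENNReal.ofReal C * (ENNReal.ofReal ‖x‖ * (ν B') ^ (1/q)) with hMdef
  have main : ENNReal.ofReal (‖x‖ ^ p) ≤ M ^ p * μ A := by
    have e1 : ENNReal.ofReal (‖x‖ ^ p) = ∫⁻ α, ENNReal.ofReal (‖f α x‖ ^ p) ∂μ := by
      rw [← ofReal_integral_eq_lintegral_ofReal hfint
        (Filter.Eventually.of_forall fun α => Real.rpow_nonneg (norm_nonneg _) p), ← hf x]
    rw [e1]
    calc ∫⁻ α, ENNReal.ofReal (‖f α x‖ ^ p) ∂μ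
        ≤ ∫⁻ α, A.indicator (fun _ => M ^ p) α ∂μ := by
          refine lintegral_mono fun α => ?_
          by_cases hm : α ∈ A
          · rw [Set.indicator_of_mem hm,
              ← ENNReal.ofReal_rpow_of_nonneg (norm_nonneg _) hp0.le]
            exact ENNReal.rpow_le_rpow (key α) hp0.le
          · have hf0 : f α x = 0 := not_not.1 hm
            simp [hf0, Real.zero_rpow hp0.ne', Set.indicator]
      _ ≤ M ^ p * μ A := lintegral_indicator_const_le A (M ^ p)
  -- take p-th roots
  have main2 : ENNReal.ofReal ‖x‖ ≤ M * (μ A) ^ (1/p) := by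
    have h3 := ENNReal.rpow_le_rpow main (one_div_nonneg.mpr hp0.le)
    rwa [ENNReal.ofReal_rpow_of_nonneg hxp.le (one_div_nonneg.mpr hp0.le),
      ← Real.rpow_mul hxn.le, mul_one_div_cancel hp0.ne', Real.rpow_one,
      ENNReal.mul_rpow_of_nonneg _ _ (one_div_nonneg.mpr hp0.le),
      ← ENNReal.rpow_mul, mul_one_div_cancel hp0.ne', ENNReal.rpow_one] at h3
  -- conclude
  have main3 : ENNReal.ofReal ‖x‖ * 1 ≤ ENNReal.ofReal ‖x‖ *
      (ENNReal.ofReal C * ((μ A) ^ (1/p) * (ν B') ^ (1/q))) := by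
    rw [mul_one]
    refine main2.trans (le_of_eq ?_)
    rw [hMdef]; ring
  have hxne : ENNReal.ofReal ‖x‖ ≠ 0 := by
    simpa [ENNReal.ofReal_eq_zero, not_le, hxn] using hx
  have h1le : (1:ℝ≥0∞) ≤ ENNReal.ofReal C * ((μ A) ^ (1/p) * (ν B') ^ (1/q)) :=
    (ENNReal.mul_le_mul_iff_right hxne ENNReal.ofReal_ne_top).mp main3
  have hCne : ENNReal.ofReal C ≠ 0 := by
    simp [ENNReal.ofReal_eq_zero, not_le, hC0]
  have hfin : (ENNReal.ofReal C)⁻¹ ≤ (μ A) ^ (1/p) * (ν B') ^ (1/q) := by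
    calc (ENNReal.ofReal C)⁻¹ = (ENNReal.ofReal C)⁻¹ * 1 := (mul_one _).symm
      _ ≤ (ENNReal.ofReal C)⁻¹ *
          (ENNReal.ofReal C * ((μ A) ^ (1/p) * (ν B') ^ (1/q))) := mul_le_mul_right h1le _
      _ = _ := by rw [← mul_assoc, ENNReal.inv_mul_cancel hCne ENNReal.ofReal_ne_top, one_mul]
  rw [ge_iff_le, hBB', one_div, ENNReal.ofReal_inv_of_pos hC0]
  exact hfin
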